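/- For 0<q<1 and ν>-1, the normalized q-Bessel function satisfies the bound |j_ν(q^n, q²)| ≤ C for n ≥ 0 and |j_ν(q^n, q²)| ≤ C·q^{n²-(2ν+1)n} for n < 0, where C = (-q²;q²)_∞ (-q^{2ν+2};q²)_∞ / (q^{2ν+2};q²)_∞. -/

import Mathlib

set_option maxHeartbeats 1000000


open scoped BigOperators
noncomputable section

/-- Infinite q-Pochhammer symbol `(a;q)_∞`. -/
def qPochInf (a q : ℝ) : ℝ := ∏' k : ℕ, (1 - a * q ^ k)

/-- Finite q-Pochhammer symbol `(a;q)_n`. -/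
def qPochFin (a q : ℝ) (n : ℕ) : ℝ := ∏ k ∈ Finset.range n, (1 - a * q ^ k)

/-- Normalized q-Bessel function `j_ν(x, q²)`. -/
def jnu (q ν x : ℝ) : ℝ :=
  ∑' n : ℕ, (-1 : ℝ) ^ n * q ^ (n * (n + 1)) * x ^ (2 * n) /
    (qPochFin (q ^ (2 * ν + 2)) (q ^ 2) n * qPochFin (q ^ 2) (q ^ 2) n)

/-- q-Jackson integral on `(0,∞)`. -/
def qInt (q : ℝ) (f : ℝ → ℝ) : ℝ := (1 - q) * ∑' n : ℤ, q ^ n * f (q ^ n)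

/-- The constant `c_{q,ν}`. -/
def cq (q ν : ℝ) : ℝ :=
  qPochInf (q ^ (2 * ν + 2)) (q ^ 2) / ((1 - q) * qPochInf (q ^ 2) (q ^ 2))

/-- q-Bessel Fourier transform `F_{q,ν}`. -/
def qFT (q ν : ℝ) (f : ℝ → ℝ) (x : ℝ) : ℝ :=
  cq q ν * qInt q (fun t => f t * jnu q ν (x * t) * t ^ (2 * ν + 1))

/-- Membership in `L^p_{q,ν}` (summability of the defining q-integral). -/
def qMemLp (q ν p : ℝ) (f : ℝ → ℝ) : Prop :=
  Summable (fun n : ℤ => q ^ n * |f (q ^ n)| ^ p * ((q : ℝ) ^ n) ^ (2 * ν + 1))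

/-- The norm `‖f‖_{q,p,ν}`. -/
def qNorm (q ν p : ℝ) (f : ℝ → ℝ) : ℝ :=
  (qInt q (fun x => |f x| ^ p * x ^ (2 * ν + 1))) ^ (1 / p)

/-- Inner product `⟨f,g⟩_{q,ν}`. -/
def qInner (q ν : ℝ) (f g : ℝ → ℝ) : ℝ :=
  qInt q (fun x => f x * g x * x ^ (2 * ν + 1))

/-- q-translation operator `T^ν_{q,x}`. -/
def qTrans (q ν x : ℝ) (f : ℝ → ℝ) (y : ℝ) : ℝ :=
  cq q ν * qInt q (fun t => qFT q ν f t * jnu q ν (y * t) * jnu q ν (x * t) * t ^ (2 * ν + 1))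

/-- q-convolution product `f *_q g = F_{q,ν}[F_{q,ν}f × F_{q,ν}g]`. -/
def qConv (q ν : ℝ) (f g : ℝ → ℝ) : ℝ → ℝ :=
  qFT q ν (fun t => qFT q ν f t * qFT q ν g t)

/-- q-Bessel operator `Δ_{q,ν}`. -/
def qBesselOp (q ν : ℝ) (f : ℝ → ℝ) (x : ℝ) : ℝ :=
  (f (x / q) - (1 + q ^ (2 * ν)) * f x + q ^ (2 * ν) * f (q * x)) / x ^ 2

namespace QBAux
open Real Filter Finset

/-- The Euler-type series `∑ (-1)^m Q^(C(m,2)) x^m / (Q;Q)_m`. -/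
def qs (Q x : ℝ) : ℝ := ∑' m : ℕ, (-1 : ℝ) ^ m * Q ^ (m.choose 2) * x ^ m / qPochFin Q Q m

lemma c2s (m : ℕ) : (m + 1).choose 2 = m.choose 2 + m := by
  simp [Nat.choose_succ_succ, Nat.choose_one_right, Nat.add_comm]

lemma c2add (k m : ℕ) : (k + m).choose 2 = k.choose 2 + m.choose 2 + k * m := by
  induction m with
  | zero => simp
  | succ m ih =>
    have h : k + (m + 1) = (k + m) + 1 := by ring
    rw [h, c2s, ih, c2s]; ring

lemma two_mul_c2 (m : ℕ) : 2 * ((m + 1).choose 2) = m * (m + 1) := by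
  induction m with
  | zero => simp
  | succ m ih => rw [c2s, Nat.mul_add, ih]; ring

variable {Q : ℝ}

lemma fact_pos (hQ0 : 0 < Q) (hQ1 : Q < 1) {x : ℝ} (hx : x < 1) (k : ℕ) :
    0 < 1 - x * Q ^ k := by
  rcases le_or_gt x 0 with h | h
  · nlinarith [pow_pos hQ0 k, pow_le_one₀ hQ0.le hQ1.le (n := k)]
  · nlinarith [pow_pos hQ0 k, pow_le_one₀ hQ0.le hQ1.le (n := k)]

lemma pochFin_pos (hQ0 : 0 < Q) (hQ1 : Q < 1) {x : ℝ} (hx : x < 1) (n : ℕ) :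
    0 < qPochFin x Q n :=
  Finset.prod_pos fun k _ => fact_pos hQ0 hQ1 hx k

lemma pochFin_le_one (hQ0 : 0 < Q) (hQ1 : Q < 1) {x : ℝ} (hx0 : 0 ≤ x) (hx : x < 1) (n : ℕ) :
    qPochFin x Q n ≤ 1 := by
  apply Finset.prod_le_one
  · intro k _; exact (fact_pos hQ0 hQ1 hx k).le
  · intro k _
    have : 0 ≤ x * Q ^ k := mul_nonneg hx0 (pow_pos hQ0 k).le
    linarith

lemma pochFin_succ (x : ℝ) (n : ℕ) :
    qPochFin x Q (n + 1) = qPochFin x Q n * (1 - x * Q ^ n) := by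
  simp [qPochFin, Finset.prod_range_succ]

lemma summable_base (hQ0 : 0 < Q) (hQ1 : Q < 1) (y : ℝ) :
    Summable fun m : ℕ => Q ^ (m.choose 2) * |y| ^ m := by
  apply summable_of_ratio_norm_eventually_le (r := 1/2) (by norm_num)
  have h0 : Tendsto (fun m : ℕ => Q ^ m * |y|) atTop (nhds 0) := by
    simpa using (tendsto_pow_atTop_nhds_zero_of_lt_one hQ0.le hQ1).mul_const |y|
  filter_upwards [h0.eventually_le_const (by norm_num : (0:ℝ) < 1/2)] with m hm
  have he : Q ^ ((m+1).choose 2) * |y| ^ (m+1) =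
      (Q ^ m * |y|) * (Q ^ (m.choose 2) * |y| ^ m) := by
    rw [c2s, pow_add, pow_succ]; ring
  have hnn : ∀ j : ℕ, 0 ≤ Q ^ (j.choose 2) * |y| ^ j := fun j =>
    mul_nonneg (pow_nonneg hQ0.le _) (pow_nonneg (abs_nonneg _) _)
  rw [norm_of_nonneg (hnn (m+1)), norm_of_nonneg (hnn m), he]
  exact mul_le_mul_of_nonneg_right hm (hnn m)

/-- The `(Q;Q)_m`-denominated positive series is summable, denominators bounded below. -/
lemma summable_div (hQ0 : 0 < Q) (hQ1 : Q < 1) (x : ℝ) {w : ℕ → ℝ} {c : ℝ} (hc : 0 < c)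
    (hw : ∀ m, c ≤ w m) :
    Summable fun m : ℕ => Q ^ (m.choose 2) * |x| ^ m / w m := by
  have hb : Summable fun m : ℕ => (1/c) * (Q ^ (m.choose 2) * |x| ^ m) :=
    (summable_base hQ0 hQ1 x).mul_left _
  apply Summable.of_nonneg_of_le _ _ hb
  · intro m
    exact div_nonneg (mul_nonneg (pow_nonneg hQ0.le _) (pow_nonneg (abs_nonneg _) _))
      (hc.le.trans (hw m))
  · intro m
    have hnn : (0:ℝ) ≤ Q ^ (m.choose 2) * |x| ^ m :=
      mul_nonneg (pow_nonneg hQ0.le _) (pow_nonneg (abs_nonneg _) _)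
    have hwm : 0 < w m := lt_of_lt_of_le hc (hw m)
    rw [div_le_iff₀ hwm, one_div, mul_comm c⁻¹, mul_assoc]
    calc Q ^ (m.choose 2) * |x| ^ m = (Q ^ (m.choose 2) * |x| ^ m) * (c⁻¹ * c) := by
            rw [inv_mul_cancel₀ hc.ne']; ring
      _ ≤ Q ^ (m.choose 2) * |x| ^ m * (c⁻¹ * w m) := by
            apply mul_le_mul_of_nonneg_left _ hnn
            exact mul_le_mul_of_nonneg_left (hw m) (inv_nonneg.2 hc.le)

lemma term_abs (hQ0 : 0 < Q) (hQ1 : Q < 1) (x : ℝ) (m : ℕ) :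
    |(-1 : ℝ) ^ m * Q ^ (m.choose 2) * x ^ m / qPochFin Q Q m| =
      Q ^ (m.choose 2) * |x| ^ m / qPochFin Q Q m := by
  have hp := pochFin_pos hQ0 hQ1 hQ1 m
  rw [abs_div, abs_of_pos hp, abs_mul, abs_mul, abs_pow, abs_pow, abs_pow, abs_neg, abs_one,
    one_pow, one_mul, abs_of_pos hQ0]

lemma pochFin_add (x : ℝ) (N j : ℕ) :
    qPochFin x Q (N + j) = qPochFin x Q N * qPochFin (x * Q ^ N) Q j := by
  induction j with
  | zero => simp [qPochFin]
  | succ j ih =>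
    rw [← Nat.add_assoc, pochFin_succ, ih, pochFin_succ, mul_assoc]
    congr 2
    rw [mul_assoc, ← pow_add]

lemma pochFin_ge_one_sub (hQ0 : 0 < Q) (hQ1 : Q < 1) {x : ℝ} (hx0 : 0 ≤ x) (hx1 : x < 1)
    (m : ℕ) : 1 - x / (1 - Q) ≤ qPochFin x Q m := by
  have h1Q : 0 < 1 - Q := by linarith
  have hsum : ∀ m : ℕ, (∑ k ∈ Finset.range m, Q ^ k) ≤ 1 / (1 - Q) := by
    intro m
    rw [le_div_iff₀ h1Q]
    have hgs := geom_sum_mul (Q : ℝ) m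
    have hpm : 0 ≤ Q ^ m := (pow_pos hQ0 m).le
    nlinarith
  have key : ∀ m : ℕ, 1 - x * (∑ k ∈ Finset.range m, Q ^ k) ≤ qPochFin x Q m := by
    intro m
    induction m with
    | zero => simp [qPochFin]
    | succ m ih =>
      rw [pochFin_succ, Finset.sum_range_succ]
      have hQm : 0 ≤ x * Q ^ m := mul_nonneg hx0 (pow_pos hQ0 m).le
      have hQm1 : x * Q ^ m ≤ x := by
        have h := pow_le_one₀ hQ0.le hQ1.le (n := m)
        nlinarith
      have hs : 0 ≤ x * (∑ k ∈ Finset.range m, Q ^ k) :=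
        mul_nonneg hx0 (Finset.sum_nonneg fun k _ => (pow_pos hQ0 k).le)
      nlinarith [ih, mul_le_mul_of_nonneg_right ih (by linarith : (0:ℝ) ≤ 1 - x * Q ^ m)]
  calc 1 - x / (1 - Q) ≤ 1 - x * (∑ k ∈ Finset.range m, Q ^ k) := by
        have := hsum m
        have : x * (∑ k ∈ Finset.range m, Q ^ k) ≤ x * (1 / (1-Q)) :=
          mul_le_mul_of_nonneg_left this hx0
        rw [mul_one_div] at this
        linarith
    _ ≤ qPochFin x Q m := key m

lemma pochFin_anti (hQ0 : 0 < Q) (hQ1 : Q < 1) {x : ℝ} (hx0 : 0 ≤ x) (hx : x < 1)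
    {m n : ℕ} (hmn : m ≤ n) : qPochFin x Q n ≤ qPochFin x Q m := by
  obtain ⟨j, rfl⟩ := Nat.exists_eq_add_of_le hmn
  rw [pochFin_add]
  have hx' : 0 ≤ x * Q ^ m := mul_nonneg hx0 (pow_pos hQ0 m).le
  have hx'' : x * Q ^ m < 1 := by
    have := pow_le_one₀ hQ0.le hQ1.le (n := m)
    nlinarith
  calc qPochFin x Q m * qPochFin (x * Q ^ m) Q j
      ≤ qPochFin x Q m * 1 := by
        apply mul_le_mul_of_nonneg_left (pochFin_le_one hQ0 hQ1 hx' hx'' j)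
          (pochFin_pos hQ0 hQ1 hx m).le
    _ = qPochFin x Q m := mul_one _

lemma exists_pochFin_lb (hQ0 : 0 < Q) (hQ1 : Q < 1) {x : ℝ} (hx0 : 0 ≤ x) (hx : x < 1) :
    ∃ c : ℝ, 0 < c ∧ ∀ m, c ≤ qPochFin x Q m := by
  have h1Q : 0 < 1 - Q := by linarith
  obtain ⟨N, hN⟩ := exists_pow_lt_of_lt_one h1Q hQ1
  have hxQN : x * Q ^ N < 1 - Q := by
    have h0 : 0 ≤ Q ^ N := (pow_pos hQ0 N).le
    nlinarith
  have hxQN0 : 0 ≤ x * Q ^ N := mul_nonneg hx0 (pow_pos hQ0 N).le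
  have hfac : 0 < 1 - (x * Q ^ N) / (1 - Q) := by
    rw [sub_pos, div_lt_one h1Q]; exact hxQN
  refine ⟨qPochFin x Q N * (1 - (x * Q ^ N) / (1 - Q)),
    mul_pos (pochFin_pos hQ0 hQ1 hx N) hfac, fun m => ?_⟩
  rcases le_or_gt m N with h | h
  · calc qPochFin x Q N * (1 - (x * Q ^ N) / (1 - Q))
        ≤ qPochFin x Q N * 1 := by
          apply mul_le_mul_of_nonneg_left _ (pochFin_pos hQ0 hQ1 hx N).le
          have : 0 ≤ (x * Q ^ N) / (1 - Q) := div_nonneg hxQN0 h1Q.le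
          linarith
      _ = qPochFin x Q N := mul_one _
      _ ≤ qPochFin x Q m := pochFin_anti hQ0 hQ1 hx0 hx h
  · obtain ⟨j, rfl⟩ := Nat.exists_eq_add_of_le h.le
    rw [pochFin_add]
    exact mul_le_mul_of_nonneg_left (pochFin_ge_one_sub hQ0 hQ1 hxQN0 (by linarith) j)
      (pochFin_pos hQ0 hQ1 hx N).le

lemma summable_qs (hQ0 : 0 < Q) (hQ1 : Q < 1) (x : ℝ) :
    Summable fun m : ℕ => (-1 : ℝ) ^ m * Q ^ (m.choose 2) * x ^ m / qPochFin Q Q m := by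
  apply Summable.of_abs
  obtain ⟨c, hc, hcle⟩ := exists_pochFin_lb hQ0 hQ1 hQ0.le hQ1
  exact (summable_div hQ0 hQ1 x hc hcle).congr fun m => (term_abs hQ0 hQ1 x m).symm

/-- tail-coefficient constant -/
def qB (Q : ℝ) : ℝ := ∑' m : ℕ, Q ^ ((m+1).choose 2) / qPochFin Q Q (m+1)

lemma summable_g (hQ0 : 0 < Q) (hQ1 : Q < 1) :
    Summable fun m : ℕ => Q ^ (m.choose 2) / qPochFin Q Q m := by
  obtain ⟨c, hc, hcle⟩ := exists_pochFin_lb hQ0 hQ1 hQ0.le hQ1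
  have := summable_div hQ0 hQ1 1 hc hcle
  exact this.congr fun m => by simp

lemma summable_gshift (hQ0 : 0 < Q) (hQ1 : Q < 1) :
    Summable fun m : ℕ => Q ^ ((m+1).choose 2) / qPochFin Q Q (m+1) :=
  (summable_nat_add_iff 1).mpr (summable_g hQ0 hQ1)

lemma qB_nonneg (hQ0 : 0 < Q) (hQ1 : Q < 1) : 0 ≤ qB Q :=
  tsum_nonneg fun m => div_nonneg (pow_nonneg hQ0.le _) (pochFin_pos hQ0 hQ1 hQ1 _).le

lemma abs_tsum_le {f : ℕ → ℝ} (h : Summable fun m => |f m|) :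
    |∑' m, f m| ≤ ∑' m, |f m| := by
  have h2 : Summable fun m => ‖f m‖ := by simpa [Real.norm_eq_abs] using h
  have := norm_tsum_le_tsum_norm h2
  simpa [Real.norm_eq_abs] using this

lemma qs_sub_one (hQ0 : 0 < Q) (hQ1 : Q < 1) {x : ℝ} (hx : |x| ≤ 1) :
    |qs Q x - 1| ≤ |x| * qB Q := by
  have hf := summable_qs hQ0 hQ1 x
  have hf1 : Summable fun m : ℕ =>
      (-1 : ℝ) ^ (m+1) * Q ^ ((m+1).choose 2) * x ^ (m+1) / qPochFin Q Q (m+1) :=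
    (summable_nat_add_iff 1).mpr hf
  have h0 : qs Q x = 1 + ∑' m : ℕ,
      (-1 : ℝ) ^ (m+1) * Q ^ ((m+1).choose 2) * x ^ (m+1) / qPochFin Q Q (m+1) := by
    rw [qs, hf.tsum_eq_zero_add]
    congr 1
    simp [qPochFin]
  rw [h0, add_sub_cancel_left]
  have habs : ∀ m : ℕ,
      |(-1 : ℝ) ^ (m+1) * Q ^ ((m+1).choose 2) * x ^ (m+1) / qPochFin Q Q (m+1)| ≤
        |x| * (Q ^ ((m+1).choose 2) / qPochFin Q Q (m+1)) := by
    intro m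
    rw [term_abs hQ0 hQ1 x (m+1)]
    have h1 : |x| ^ (m+1) ≤ |x| := by
      calc |x| ^ (m+1) = |x| * |x| ^ m := by rw [pow_succ]; ring
        _ ≤ |x| * 1 := by
            apply mul_le_mul_of_nonneg_left _ (abs_nonneg x)
            exact pow_le_one₀ (abs_nonneg x) hx
        _ = |x| := mul_one _
    have hpp : 0 < qPochFin Q Q (m+1) := pochFin_pos hQ0 hQ1 hQ1 _
    rw [div_le_iff₀ hpp, mul_comm (Q ^ ((m+1).choose 2)) (|x| ^ (m+1))]
    calc |x| ^ (m+1) * Q ^ ((m+1).choose 2)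
        ≤ |x| * Q ^ ((m+1).choose 2) :=
          mul_le_mul_of_nonneg_right h1 (pow_nonneg hQ0.le _)
      _ = |x| * (Q ^ ((m+1).choose 2) / qPochFin Q Q (m+1)) * qPochFin Q Q (m+1) := by
          field_simp
  calc |∑' m : ℕ, (-1 : ℝ) ^ (m+1) * Q ^ ((m+1).choose 2) * x ^ (m+1) / qPochFin Q Q (m+1)|
      ≤ ∑' m : ℕ, |(-1 : ℝ) ^ (m+1) * Q ^ ((m+1).choose 2) * x ^ (m+1) / qPochFin Q Q (m+1)| := by
        exact abs_tsum_le hf1.abs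
    _ ≤ ∑' m : ℕ, |x| * (Q ^ ((m+1).choose 2) / qPochFin Q Q (m+1)) :=
        Summable.tsum_le_tsum habs hf1.abs ((summable_gshift hQ0 hQ1).mul_left _)
    _ = |x| * qB Q := by rw [tsum_mul_left]; rfl

lemma tendsto_qs_one (hQ0 : 0 < Q) (hQ1 : Q < 1) {x : ℝ} (hx : |x| ≤ 1) :
    Tendsto (fun N : ℕ => qs Q (x * Q ^ N)) atTop (nhds 1) := by
  rw [tendsto_iff_dist_tendsto_zero]
  apply squeeze_zero (fun N => dist_nonneg)
    (g := fun N : ℕ => Q ^ N * (|x| * qB Q))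
  · intro N
    have hb : |x * Q ^ N| ≤ 1 := by
      rw [abs_mul, abs_pow, abs_of_pos hQ0]
      calc |x| * Q ^ N ≤ 1 * 1 :=
        mul_le_mul hx (pow_le_one₀ hQ0.le hQ1.le) (pow_pos hQ0 N).le zero_le_one
      _ = 1 := mul_one _
    have := qs_sub_one hQ0 hQ1 hb
    rw [Real.dist_eq]
    calc |qs Q (x * Q ^ N) - 1| ≤ |x * Q ^ N| * qB Q := this
      _ = Q ^ N * (|x| * qB Q) := by
          rw [abs_mul, abs_pow, abs_of_pos hQ0]; ring
  · simpa using (tendsto_pow_atTop_nhds_zero_of_lt_one hQ0.le hQ1).mul_const (|x| * qB Q)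

lemma term_step (hQ0 : 0 < Q) (hQ1 : Q < 1) (x : ℝ) (m : ℕ) :
    (-1 : ℝ) ^ (m+1) * Q ^ ((m+1).choose 2) * x ^ (m+1) / qPochFin Q Q (m+1) -
      (-1 : ℝ) ^ (m+1) * Q ^ ((m+1).choose 2) * (Q*x) ^ (m+1) / qPochFin Q Q (m+1) =
    -x * ((-1 : ℝ) ^ m * Q ^ (m.choose 2) * (Q*x) ^ m / qPochFin Q Q m) := by
  have hp : qPochFin Q Q m ≠ 0 := (pochFin_pos hQ0 hQ1 hQ1 m).ne'
  have h1 : (1:ℝ) - Q * Q ^ m ≠ 0 := (fact_pos hQ0 hQ1 hQ1 m).ne'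
  rw [pochFin_succ, c2s, pow_add, pow_succ x, pow_succ (Q*x), mul_pow, pow_succ (-1:ℝ)]
  field_simp
  ring

lemma qs_step (hQ0 : 0 < Q) (hQ1 : Q < 1) (x : ℝ) :
    qs Q x = (1 - x) * qs Q (Q * x) := by
  have hf := summable_qs hQ0 hQ1 x
  have hg := summable_qs hQ0 hQ1 (Q * x)
  have hkey : qs Q x - qs Q (Q * x) = -x * qs Q (Q * x) := by
    rw [qs, qs, ← hf.tsum_sub hg]
    rw [(hf.sub hg).tsum_eq_zero_add]
    have h00 : (-1 : ℝ) ^ 0 * Q ^ (Nat.choose 0 2) * x ^ 0 / qPochFin Q Q 0 -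
        (-1 : ℝ) ^ 0 * Q ^ (Nat.choose 0 2) * (Q*x) ^ 0 / qPochFin Q Q 0 = 0 := by
      simp
    rw [h00, zero_add]
    rw [tsum_congr (fun m => term_step hQ0 hQ1 x m)]
    exact tsum_mul_left
  linarith [hkey]

lemma qs_iterate (hQ0 : 0 < Q) (hQ1 : Q < 1) (x : ℝ) (N : ℕ) :
    qs Q x = qPochFin x Q N * qs Q (x * Q ^ N) := by
  induction N with
  | zero => simp [qPochFin]
  | succ N ih =>
    rw [pochFin_succ, ih, qs_step hQ0 hQ1 (x * Q ^ N)]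
    have : Q * (x * Q ^ N) = x * Q ^ (N+1) := by rw [pow_succ]; ring
    rw [this]
    ring

lemma tendsto_partial_prod (hQ0 : 0 < Q) (hQ1 : Q < 1) {x : ℝ} (hx1 : |x| ≤ 1) (hx : x < 1) :
    Tendsto (fun N : ℕ => qPochFin x Q N) atTop (nhds (qs Q x)) := by
  have ht := tendsto_qs_one hQ0 hQ1 hx1
  have hdiv : Tendsto (fun N : ℕ => qs Q x / qs Q (x * Q ^ N)) atTop (nhds (qs Q x)) := by
    have h := (tendsto_const_nhds (x := qs Q x) (f := atTop)).div ht one_ne_zero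
    rw [div_one] at h
    exact h
  apply hdiv.congr'
  filter_upwards [ht.eventually (eventually_gt_nhds (by norm_num : (0:ℝ) < 1))] with N hN
  rw [qs_iterate hQ0 hQ1 x N, mul_div_assoc, div_self hN.ne', mul_one]

lemma qs_le_one (hQ0 : 0 < Q) (hQ1 : Q < 1) {x : ℝ} (hx0 : 0 ≤ x) (hx : x < 1) :
    qs Q x ≤ 1 := by
  have h1 : |x| ≤ 1 := by rw [abs_of_nonneg hx0]; exact hx.le
  exact le_of_tendsto (tendsto_partial_prod hQ0 hQ1 h1 hx)
    (Filter.Eventually.of_forall fun N => pochFin_le_one hQ0 hQ1 hx0 hx N)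

lemma qs_pos (hQ0 : 0 < Q) (hQ1 : Q < 1) {x : ℝ} (hx0 : 0 ≤ x) (hx : x < 1) :
    0 < qs Q x := by
  have h1 : |x| ≤ 1 := by rw [abs_of_nonneg hx0]; exact hx.le
  have ht := tendsto_qs_one hQ0 hQ1 h1
  obtain ⟨N, hN⟩ := (ht.eventually (eventually_gt_nhds (by norm_num : (0:ℝ) < 1))).exists
  rw [qs_iterate hQ0 hQ1 x N]
  exact mul_pos (pochFin_pos hQ0 hQ1 hx N) hN

lemma qs_le_pochFin (hQ0 : 0 < Q) (hQ1 : Q < 1) {x : ℝ} (hx0 : 0 ≤ x) (hx : x < 1) (N : ℕ) :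
    qs Q x ≤ qPochFin x Q N := by
  rw [qs_iterate hQ0 hQ1 x N]
  have hx' : 0 ≤ x * Q ^ N := mul_nonneg hx0 (pow_pos hQ0 N).le
  have hx'' : x * Q ^ N < 1 := by
    have h := pow_le_one₀ hQ0.le hQ1.le (n := N)
    nlinarith
  calc qPochFin x Q N * qs Q (x * Q ^ N) ≤ qPochFin x Q N * 1 :=
        mul_le_mul_of_nonneg_left (qs_le_one hQ0 hQ1 hx' hx'') (pochFin_pos hQ0 hQ1 hx N).le
    _ = qPochFin x Q N := mul_one _

lemma euler (hQ0 : 0 < Q) (hQ1 : Q < 1) {x : ℝ} (hx : |x| < 1) :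
    (∏' k : ℕ, (1 - x * Q ^ k)) = qs Q x := by
  have hxlt : x < 1 := lt_of_le_of_lt (le_abs_self x) hx
  have hfac : ∀ k : ℕ, 0 < 1 - x * Q ^ k := fact_pos hQ0 hQ1 hxlt
  have h1x : 0 < 1 - |x| := by linarith
  have hlog : Summable fun k : ℕ => Real.log (1 - x * Q ^ k) := by
    apply Summable.of_norm
    have hgeom : Summable fun k : ℕ => (|x| / (1 - |x|)) * Q ^ k :=
      (summable_geometric_of_lt_one hQ0.le hQ1).mul_left _
    apply Summable.of_nonneg_of_le (fun k => norm_nonneg _) _ hgeom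
    · intro k
      have hyk : |x * Q ^ k| < 1 := by
        rw [abs_mul, abs_pow, abs_of_pos hQ0]
        calc |x| * Q ^ k ≤ |x| * 1 :=
            mul_le_mul_of_nonneg_left (pow_le_one₀ hQ0.le hQ1.le) (abs_nonneg x)
          _ = |x| := mul_one _
          _ < 1 := hx
      have hb := Real.abs_log_sub_add_sum_range_le hyk 0
      simp only [Finset.range_zero, Finset.sum_empty, zero_add, pow_one] at hb
      rw [Real.norm_eq_abs]
      calc |Real.log (1 - x * Q ^ k)| ≤ |x * Q ^ k| / (1 - |x * Q ^ k|) := hb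
        _ ≤ |x| * Q ^ k / (1 - |x|) := by
            apply div_le_div₀ (mul_nonneg (abs_nonneg x) (pow_pos hQ0 k).le)
            · rw [abs_mul, abs_pow, abs_of_pos hQ0]
            · linarith [hyk]
            · have : |x * Q ^ k| ≤ |x| := by
                rw [abs_mul, abs_pow, abs_of_pos hQ0]
                calc |x| * Q ^ k ≤ |x| * 1 :=
                    mul_le_mul_of_nonneg_left (pow_le_one₀ hQ0.le hQ1.le) (abs_nonneg x)
                  _ = |x| := mul_one _
              linarith
        _ = (|x| / (1 - |x|)) * Q ^ k := by ring
  have hmult : Multipliable fun k : ℕ => 1 - x * Q ^ k :=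
    Real.multipliable_of_summable_log hfac hlog
  have h1 : Tendsto (fun N : ℕ => ∏ k ∈ Finset.range N, (1 - x * Q ^ k)) atTop
      (nhds (∏' k : ℕ, (1 - x * Q ^ k))) := hmult.hasProd.tendsto_prod_nat
  have h2 := tendsto_partial_prod hQ0 hQ1 hx.le hxlt
  exact tendsto_nhds_unique h1 h2

lemma qs_neg_eq (y : ℝ) :
    qs Q (-y) = ∑' m : ℕ, Q ^ (m.choose 2) * y ^ m / qPochFin Q Q m := by
  apply tsum_congr
  intro m
  congr 1
  calc (-1 : ℝ) ^ m * Q ^ (m.choose 2) * (-y) ^ m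
      = Q ^ (m.choose 2) * ((-1) * (-y)) ^ m := by rw [mul_pow]; ring
    _ = Q ^ (m.choose 2) * y ^ m := by norm_num

lemma summable_qs_neg (hQ0 : 0 < Q) (hQ1 : Q < 1) (y : ℝ) :
    Summable fun m : ℕ => Q ^ (m.choose 2) * y ^ m / qPochFin Q Q m := by
  obtain ⟨c, hc, hcle⟩ := exists_pochFin_lb hQ0 hQ1 hQ0.le hQ1
  apply Summable.of_abs
  apply (summable_div hQ0 hQ1 y hc hcle).congr
  intro m
  rw [abs_div, abs_mul, abs_pow, abs_pow, abs_of_pos hQ0,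
    abs_of_pos (pochFin_pos hQ0 hQ1 hQ1 m)]

lemma one_le_qs_neg (hQ0 : 0 < Q) (hQ1 : Q < 1) {y : ℝ} (hy : 0 ≤ y) :
    1 ≤ qs Q (-y) := by
  rw [qs_neg_eq]
  have h0 : (1 : ℝ) = Q ^ (Nat.choose 0 2) * y ^ 0 / qPochFin Q Q 0 := by simp [qPochFin]
  rw [h0]
  apply Summable.le_tsum (summable_qs_neg hQ0 hQ1 y) 0
  intro m _
  exact div_nonneg (mul_nonneg (pow_nonneg hQ0.le _) (pow_nonneg hy _))
    (pochFin_pos hQ0 hQ1 hQ1 m).le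

lemma qs_neg_mono (hQ0 : 0 < Q) (hQ1 : Q < 1) {y z : ℝ} (hy : 0 ≤ y) (hyz : y ≤ z) :
    qs Q (-y) ≤ qs Q (-z) := by
  rw [qs_neg_eq, qs_neg_eq]
  apply Summable.tsum_le_tsum _ (summable_qs_neg hQ0 hQ1 y) (summable_qs_neg hQ0 hQ1 z)
  intro m
  have h1 : y ^ m ≤ z ^ m := pow_le_pow_left₀ hy hyz m
  have h2 : 0 < qPochFin Q Q m := pochFin_pos hQ0 hQ1 hQ1 m
  apply div_le_div_of_nonneg_right ?_ h2.le
  exact mul_le_mul_of_nonneg_left h1 (pow_nonneg hQ0.le _)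

lemma abs_qs_le (hQ0 : 0 < Q) (hQ1 : Q < 1) (w : ℝ) :
    |qs Q w| ≤ qs Q (-|w|) := by
  rw [qs]
  calc |∑' m : ℕ, (-1 : ℝ) ^ m * Q ^ (m.choose 2) * w ^ m / qPochFin Q Q m|
      ≤ ∑' m : ℕ, |(-1 : ℝ) ^ m * Q ^ (m.choose 2) * w ^ m / qPochFin Q Q m| :=
        abs_tsum_le (summable_qs hQ0 hQ1 w).abs
    _ = qs Q (-|w|) := by
        rw [qs_neg_eq]
        exact tsum_congr fun m => term_abs hQ0 hQ1 w m

lemma qs_inv_pow_zero (hQ0 : 0 < Q) (hQ1 : Q < 1) (j : ℕ) :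
    qs Q ((Q ^ j)⁻¹) = 0 := by
  rw [qs_iterate hQ0 hQ1 _ (j + 1)]
  have : qPochFin (Q ^ j)⁻¹ Q (j + 1) = 0 := by
    apply Finset.prod_eq_zero (Finset.self_mem_range_succ j)
    rw [inv_mul_cancel₀ (pow_pos hQ0 j).ne']
    ring
  rw [this, zero_mul]

/-- Key transformation: `S(a) · ₁φ₁(0;a;Q,z) = Σ_m (-1)^m Q^(C(m,2)) a^m S(zQ^m)/(Q;Q)_m`. -/
lemma key (hQ0 : 0 < Q) (hQ1 : Q < 1) {A : ℝ} (hA0 : 0 ≤ A) (hA1 : A < 1) (z : ℝ) :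
    qs Q A * (∑' k : ℕ, (-1 : ℝ) ^ k * Q ^ (k.choose 2) * z ^ k /
        (qPochFin A Q k * qPochFin Q Q k))
      = ∑' m : ℕ, ((-1 : ℝ) ^ m * Q ^ (m.choose 2) * A ^ m / qPochFin Q Q m) *
          qs Q (z * Q ^ m) := by
  set F : ℕ → ℕ → ℝ := fun k m => (-1 : ℝ) ^ (k+m) * Q ^ ((k+m).choose 2) * z ^ k * A ^ m /
    (qPochFin Q Q k * qPochFin Q Q m) with hF
  have hsplit : ∀ k m, F k m = ((-1 : ℝ) ^ k * Q ^ (k.choose 2) * z ^ k / qPochFin Q Q k) *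
      ((-1 : ℝ) ^ m * Q ^ (m.choose 2) * (A * Q ^ k) ^ m / qPochFin Q Q m) := by
    intro k m
    rw [hF]
    simp only []
    rw [c2add]
    ring
  have hsplit2 : ∀ k m, F k m = ((-1 : ℝ) ^ m * Q ^ (m.choose 2) * A ^ m / qPochFin Q Q m) *
      ((-1 : ℝ) ^ k * Q ^ (k.choose 2) * (z * Q ^ m) ^ k / qPochFin Q Q k) := by
    intro k m
    rw [hF]
    simp only []
    rw [c2add]
    ring
  have h1 : ∀ k, Summable (F k) := by
    intro k
    apply Summable.congr (((summable_qs hQ0 hQ1 (A * Q ^ k)).mul_left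
      ((-1 : ℝ) ^ k * Q ^ (k.choose 2) * z ^ k / qPochFin Q Q k)))
    intro m
    rw [hsplit k m]
  have h2 : ∀ m, Summable fun k => F k m := by
    intro m
    apply Summable.congr (((summable_qs hQ0 hQ1 (z * Q ^ m)).mul_left
      ((-1 : ℝ) ^ m * Q ^ (m.choose 2) * A ^ m / qPochFin Q Q m)))
    intro k
    rw [hsplit2 k m]
  obtain ⟨c, hc, hcle⟩ := exists_pochFin_lb hQ0 hQ1 hQ0.le hQ1
  have hu : Summable fun k : ℕ => Q ^ (k.choose 2) * |z| ^ k / qPochFin Q Q k :=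
    summable_div hQ0 hQ1 z hc hcle
  have hv : Summable fun m : ℕ => Q ^ (m.choose 2) * A ^ m / qPochFin Q Q m := by
    apply (summable_div hQ0 hQ1 A hc hcle).congr
    intro m
    rw [abs_of_nonneg hA0]
  have hunn : ∀ k : ℕ, 0 ≤ Q ^ (k.choose 2) * |z| ^ k / qPochFin Q Q k := fun k =>
    div_nonneg (mul_nonneg (pow_nonneg hQ0.le _) (pow_nonneg (abs_nonneg _) _))
      (pochFin_pos hQ0 hQ1 hQ1 k).le
  have hvnn : ∀ m : ℕ, 0 ≤ Q ^ (m.choose 2) * A ^ m / qPochFin Q Q m := fun m =>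
    div_nonneg (mul_nonneg (pow_nonneg hQ0.le _) (pow_nonneg hA0 _))
      (pochFin_pos hQ0 hQ1 hQ1 m).le
  have huv : Summable fun p : ℕ × ℕ =>
      (Q ^ (p.1.choose 2) * |z| ^ p.1 / qPochFin Q Q p.1) *
        (Q ^ (p.2.choose 2) * A ^ p.2 / qPochFin Q Q p.2) :=
    hu.mul_of_nonneg hv hunn hvnn
  have hunc : Summable (Function.uncurry F) := by
    apply Summable.of_abs
    apply Summable.of_nonneg_of_le (fun p => abs_nonneg _) _ huv
    rintro ⟨k, m⟩
    have hpk := pochFin_pos hQ0 hQ1 hQ1 k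
    have hpm := pochFin_pos hQ0 hQ1 hQ1 m
    have habs : |Function.uncurry F (k, m)| =
        Q ^ ((k+m).choose 2) * (|z| ^ k * A ^ m) / (qPochFin Q Q k * qPochFin Q Q m) := by
      rw [Function.uncurry, hF]
      simp only []
      rw [abs_div, abs_mul, abs_mul, abs_mul, abs_pow, abs_pow, abs_pow, abs_pow, abs_neg,
        abs_one, one_pow, one_mul, abs_of_pos hQ0, abs_of_nonneg hA0,
        abs_of_pos (mul_pos hpk hpm)]
      ring
    rw [habs]
    have hexp : Q ^ ((k+m).choose 2) ≤ Q ^ (k.choose 2 + m.choose 2) := by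
      apply pow_le_pow_of_le_one hQ0.le hQ1.le
      rw [c2add]
      exact Nat.le_add_right _ _
    calc Q ^ ((k+m).choose 2) * (|z| ^ k * A ^ m) / (qPochFin Q Q k * qPochFin Q Q m)
        ≤ Q ^ (k.choose 2 + m.choose 2) * (|z| ^ k * A ^ m) /
            (qPochFin Q Q k * qPochFin Q Q m) := by
          apply div_le_div_of_nonneg_right _ (mul_pos hpk hpm).le
          exact mul_le_mul_of_nonneg_right hexp
            (mul_nonneg (pow_nonneg (abs_nonneg _) _) (pow_nonneg hA0 _))
      _ = (Q ^ (k.choose 2) * |z| ^ k / qPochFin Q Q k) *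
            (Q ^ (m.choose 2) * A ^ m / qPochFin Q Q m) := by
          rw [pow_add]; ring
  have hpA : ∀ k, qPochFin A Q k ≠ 0 := fun k => (pochFin_pos hQ0 hQ1 hA1 k).ne'
  calc qs Q A * (∑' k : ℕ, (-1 : ℝ) ^ k * Q ^ (k.choose 2) * z ^ k /
          (qPochFin A Q k * qPochFin Q Q k))
      = ∑' k : ℕ, qs Q A * ((-1 : ℝ) ^ k * Q ^ (k.choose 2) * z ^ k /
          (qPochFin A Q k * qPochFin Q Q k)) := tsum_mul_left.symm
    _ = ∑' k : ℕ, ∑' m : ℕ, F k m := by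
        apply tsum_congr
        intro k
        have hit : qs Q A = qPochFin A Q k * qs Q (A * Q ^ k) := qs_iterate hQ0 hQ1 A k
        have : qs Q A * ((-1 : ℝ) ^ k * Q ^ (k.choose 2) * z ^ k /
            (qPochFin A Q k * qPochFin Q Q k)) =
            ((-1 : ℝ) ^ k * Q ^ (k.choose 2) * z ^ k / qPochFin Q Q k) * qs Q (A * Q ^ k) := by
          rw [hit]
          calc qPochFin A Q k * qs Q (A * Q ^ k) * ((-1 : ℝ) ^ k * Q ^ (k.choose 2) * z ^ k /
              (qPochFin A Q k * qPochFin Q Q k))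
              = (qPochFin A Q k * ((-1 : ℝ) ^ k * Q ^ (k.choose 2) * z ^ k) /
                  (qPochFin A Q k * qPochFin Q Q k)) * qs Q (A * Q ^ k) := by ring
            _ = ((-1 : ℝ) ^ k * Q ^ (k.choose 2) * z ^ k / qPochFin Q Q k) * qs Q (A * Q ^ k) := by
                rw [mul_div_mul_left _ _ (hpA k)]
        rw [this]
        rw [show ((-1 : ℝ) ^ k * Q ^ (k.choose 2) * z ^ k / qPochFin Q Q k) * qs Q (A * Q ^ k)
          = ∑' m : ℕ, ((-1 : ℝ) ^ k * Q ^ (k.choose 2) * z ^ k / qPochFin Q Q k) *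
            ((-1 : ℝ) ^ m * Q ^ (m.choose 2) * (A * Q ^ k) ^ m / qPochFin Q Q m)
          from tsum_mul_left.symm]
        exact tsum_congr fun m => (hsplit k m).symm
    _ = ∑' m : ℕ, ∑' k : ℕ, F k m := (Summable.tsum_comm' hunc h1 h2).symm
    _ = ∑' m : ℕ, ((-1 : ℝ) ^ m * Q ^ (m.choose 2) * A ^ m / qPochFin Q Q m) *
          qs Q (z * Q ^ m) := by
        apply tsum_congr
        intro m
        rw [show ((-1 : ℝ) ^ m * Q ^ (m.choose 2) * A ^ m / qPochFin Q Q m) * qs Q (z * Q ^ m)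
          = ∑' k : ℕ, ((-1 : ℝ) ^ m * Q ^ (m.choose 2) * A ^ m / qPochFin Q Q m) *
            ((-1 : ℝ) ^ k * Q ^ (k.choose 2) * (z * Q ^ m) ^ k / qPochFin Q Q k)
          from tsum_mul_left.symm]
        exact tsum_congr fun k => hsplit2 k m

lemma jnu_term_eq (q : ℝ) (x : ℝ) (k : ℕ) :
    (-1 : ℝ) ^ k * q ^ (k * (k + 1)) * x ^ (2 * k) =
      (-1 : ℝ) ^ k * (q ^ 2) ^ (k.choose 2) * (q ^ 2 * x ^ 2) ^ k := by
  have h2 : 2 * (k.choose 2 + k) = k * (k + 1) := by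
    rw [← c2s]; exact two_mul_c2 k
  calc (-1 : ℝ) ^ k * q ^ (k * (k + 1)) * x ^ (2 * k)
      = (-1 : ℝ) ^ k * q ^ (2 * (k.choose 2 + k)) * x ^ (2 * k) := by rw [h2]
    _ = (-1 : ℝ) ^ k * ((q ^ 2) ^ (k.choose 2) * (q ^ 2) ^ k) * (x ^ 2) ^ k := by
        rw [Nat.mul_add, pow_add, pow_mul q 2, pow_mul q 2, pow_mul x 2]
    _ = (-1 : ℝ) ^ k * (q ^ 2) ^ (k.choose 2) * (q ^ 2 * x ^ 2) ^ k := by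
        rw [mul_pow]; ring

end QBAux

open QBAux

theorem q_bessel_bound (q ν : ℝ) (hq : 0 < q) (hq1 : q < 1) (hν : -1 < ν) (n : ℤ) :
    (0 ≤ n → |jnu q ν (q ^ n)| ≤
      qPochInf (-(q ^ 2)) (q ^ 2) * qPochInf (-(q ^ (2 * ν + 2))) (q ^ 2) /
        qPochInf (q ^ (2 * ν + 2)) (q ^ 2)) ∧
    (n < 0 → |jnu q ν (q ^ n)| ≤
      qPochInf (-(q ^ 2)) (q ^ 2) * qPochInf (-(q ^ (2 * ν + 2))) (q ^ 2) /
        qPochInf (q ^ (2 * ν + 2)) (q ^ 2) * q ^ ((n : ℝ) ^ 2 - (2 * ν + 1) * (n : ℝ))) := by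
  have hQ0 : (0:ℝ) < q ^ 2 := by positivity
  have hQ1 : q ^ 2 < 1 := by nlinarith
  set Q : ℝ := q ^ 2 with hQdef
  set A : ℝ := q ^ (2 * ν + 2) with hAdef
  have hA0 : 0 < A := Real.rpow_pos_of_pos hq _
  have hA1 : A < 1 := Real.rpow_lt_one hq.le hq1 (by linarith)
  set x : ℝ := q ^ n with hxdef
  have hx0 : 0 < x := zpow_pos hq n
  set z : ℝ := Q * x ^ 2 with hzdef
  have hz0 : 0 < z := by positivity
  have hjnu : jnu q ν x = ∑' k : ℕ, (-1 : ℝ) ^ k * Q ^ (k.choose 2) * z ^ k /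
      (qPochFin A Q k * qPochFin Q Q k) := by
    rw [jnu]
    exact tsum_congr fun k => by rw [jnu_term_eq q x k]
  -- Euler identities for the three infinite products
  have hC1 : qPochInf (-(q ^ 2)) (q ^ 2) = qs Q (-Q) := by
    rw [qPochInf]
    exact euler hQ0 hQ1 (by rw [abs_neg, abs_of_pos hQ0]; exact hQ1)
  have hC2 : qPochInf (-(q ^ (2 * ν + 2))) (q ^ 2) = qs Q (-A) := by
    rw [qPochInf]
    exact euler hQ0 hQ1 (by rw [abs_neg, abs_of_pos hA0]; exact hA1)
  have hC3 : qPochInf (q ^ (2 * ν + 2)) (q ^ 2) = qs Q A := by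
    rw [qPochInf]
    exact euler hQ0 hQ1 (by rw [abs_of_pos hA0]; exact hA1)
  have hqsA : 0 < qs Q A := qs_pos hQ0 hQ1 hA0.le hA1
  have hqsnA : 1 ≤ qs Q (-A) := one_le_qs_neg hQ0 hQ1 hA0.le
  have hqsnQ : 1 ≤ qs Q (-Q) := one_le_qs_neg hQ0 hQ1 hQ0.le
  obtain ⟨c, hc, hcle⟩ := exists_pochFin_lb hQ0 hQ1 hQ0.le hQ1
  have hpApos : ∀ k, 0 < qPochFin A Q k := pochFin_pos hQ0 hQ1 hA1
  have hpQpos : ∀ k, 0 < qPochFin Q Q k := pochFin_pos hQ0 hQ1 hQ1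
  have hpAge : ∀ k, qs Q A ≤ qPochFin A Q k := qs_le_pochFin hQ0 hQ1 hA0.le hA1
  constructor
  · -- case n ≥ 0
    intro hn
    have hx1 : x ≤ 1 := by
      rw [hxdef]
      obtain ⟨m, rfl⟩ : ∃ m : ℕ, n = (m : ℤ) := ⟨n.toNat, (Int.toNat_of_nonneg hn).symm⟩
      rw [zpow_natCast]
      exact pow_le_one₀ hq.le hq1.le
    have hzQ : z ≤ Q := by
      have hx2 : x ^ 2 ≤ 1 := by nlinarith
      rw [hzdef]
      nlinarith
    -- summability of |terms|
    have hwge : ∀ k, qs Q A * c ≤ qPochFin A Q k * qPochFin Q Q k := fun k =>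
      mul_le_mul (hpAge k) (hcle k) hc.le (hpApos k).le
    have hsum : Summable fun k : ℕ => Q ^ (k.choose 2) * z ^ k /
        (qPochFin A Q k * qPochFin Q Q k) := by
      apply (summable_div hQ0 hQ1 z (mul_pos hqsA hc) hwge).congr
      intro k
      rw [abs_of_pos hz0]
    have habs : ∀ k : ℕ, |(-1 : ℝ) ^ k * Q ^ (k.choose 2) * z ^ k /
        (qPochFin A Q k * qPochFin Q Q k)| =
        Q ^ (k.choose 2) * z ^ k / (qPochFin A Q k * qPochFin Q Q k) := by
      intro k
      rw [abs_div, abs_mul, abs_mul, abs_pow, abs_neg, abs_one, one_pow, one_mul,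
        abs_of_pos (pow_pos hQ0 _), abs_of_pos (pow_pos hz0 _),
        abs_of_pos (mul_pos (hpApos k) (hpQpos k))]
    have hb : Summable fun k : ℕ => (1 / qs Q A) * (Q ^ (k.choose 2) * Q ^ k / qPochFin Q Q k) :=
      ((summable_qs_neg hQ0 hQ1 Q).mul_left _)
    have hle : |jnu q ν x| ≤ (1 / qs Q A) * qs Q (-Q) := by
      rw [hjnu]
      calc |∑' k : ℕ, (-1 : ℝ) ^ k * Q ^ (k.choose 2) * z ^ k /
              (qPochFin A Q k * qPochFin Q Q k)|
          ≤ ∑' k : ℕ, |(-1 : ℝ) ^ k * Q ^ (k.choose 2) * z ^ k /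
              (qPochFin A Q k * qPochFin Q Q k)| := by
            apply abs_tsum_le
            apply hsum.congr
            intro k
            rw [habs k]
        _ ≤ ∑' k : ℕ, (1 / qs Q A) * (Q ^ (k.choose 2) * Q ^ k / qPochFin Q Q k) := by
            apply Summable.tsum_le_tsum _ (hsum.congr fun k => (habs k).symm) hb
            intro k
            rw [habs k]
            have hnum : Q ^ (k.choose 2) * z ^ k ≤ Q ^ (k.choose 2) * Q ^ k :=
              mul_le_mul_of_nonneg_left (pow_le_pow_left₀ hz0.le hzQ k)
                (pow_nonneg hQ0.le _)
            have hden : qs Q A * qPochFin Q Q k ≤ qPochFin A Q k * qPochFin Q Q k :=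
              mul_le_mul_of_nonneg_right (hpAge k) (hpQpos k).le
            calc Q ^ (k.choose 2) * z ^ k / (qPochFin A Q k * qPochFin Q Q k)
                ≤ Q ^ (k.choose 2) * Q ^ k / (qs Q A * qPochFin Q Q k) := by
                  apply div_le_div₀ (mul_nonneg (pow_nonneg hQ0.le _) (pow_nonneg hQ0.le _))
                    hnum (mul_pos hqsA (hpQpos k)) hden
              _ = (1 / qs Q A) * (Q ^ (k.choose 2) * Q ^ k / qPochFin Q Q k) := by
                  field_simp
        _ = (1 / qs Q A) * qs Q (-Q) := by
            rw [tsum_mul_left, qs_neg_eq]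
    rw [hC1, hC2, hC3]
    have hinv : (0:ℝ) < (qs Q A)⁻¹ := inv_pos.2 hqsA
    calc |jnu q ν x| ≤ (1 / qs Q A) * qs Q (-Q) := hle
      _ = qs Q (-Q) * 1 * (qs Q A)⁻¹ := by rw [one_div]; ring
      _ ≤ qs Q (-Q) * qs Q (-A) * (qs Q A)⁻¹ := by
          apply mul_le_mul_of_nonneg_right _ hinv.le
          exact mul_le_mul_of_nonneg_left hqsnA (by linarith [hqsnQ])
      _ = qs Q (-Q) * qs Q (-A) / qs Q A := by rw [div_eq_mul_inv]
  · -- case n < 0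
    intro hn
    have hqne : q ≠ 0 := hq.ne'
    set p : ℕ := (-n).toNat with hpdef
    have hp1 : 1 ≤ p := by omega
    have hnp : n = -(p:ℤ) := by omega
    have hzQm : ∀ m : ℕ, z * Q ^ m = q ^ ((2:ℤ) + n * 2 + 2 * (m:ℤ)) := by
      intro m
      rw [hzdef, hxdef, hQdef]
      have h1 : ((q:ℝ) ^ n) ^ (2:ℕ) = q ^ (n * 2) := by
        rw [← zpow_natCast (q ^ n) 2, ← zpow_mul]
        norm_num
      have h2 : ((q:ℝ) ^ (2:ℕ)) ^ m = q ^ ((2 * m : ℕ) : ℤ) := by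
        rw [← pow_mul, zpow_natCast]
      have h3 : (q:ℝ) ^ (2:ℕ) = q ^ ((2:ℕ) : ℤ) := (zpow_natCast q 2).symm
      calc (q:ℝ) ^ (2:ℕ) * (q ^ n) ^ (2:ℕ) * ((q:ℝ) ^ (2:ℕ)) ^ m
          = q ^ ((2:ℕ) : ℤ) * q ^ (n * 2) * q ^ ((2 * m : ℕ) : ℤ) := by rw [h1, h2, h3]
        _ = q ^ ((2:ℤ) + n * 2 + 2 * (m:ℤ)) := by
            rw [← zpow_add₀ hqne, ← zpow_add₀ hqne]
            norm_num
    have hvanish : ∀ m : ℕ, m < p → qs Q (z * Q ^ m) = 0 := by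
      intro m hm
      have hje : (2:ℤ) + n * 2 + 2 * (m:ℤ) = -((2 * (p - 1 - m) : ℕ) : ℤ) := by
        push_cast [Nat.cast_sub, hnp] <;> omega
      rw [hzQm m, hje, zpow_neg, zpow_natCast, pow_mul]
      exact qs_inv_pow_zero hQ0 hQ1 (p - 1 - m)
    have hshift : ∀ i : ℕ, z * Q ^ (i + p) = Q ^ (i + 1) := by
      intro i
      have hje : (2:ℤ) + n * 2 + 2 * ((i + p : ℕ):ℤ) = ((2 * (i + 1) : ℕ) : ℤ) := by
        push_cast [hnp]
        ring
      rw [hzQm (i + p), hje, zpow_natCast, pow_mul]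
    have hkey := key hQ0 hQ1 hA0.le hA1 z
    rw [← hjnu] at hkey
    set h : ℕ → ℝ := fun m => ((-1 : ℝ) ^ m * Q ^ (m.choose 2) * A ^ m / qPochFin Q Q m) *
      qs Q (z * Q ^ m) with hhdef
    -- summability of h
    have hcabs : ∀ m : ℕ, |(-1 : ℝ) ^ m * Q ^ (m.choose 2) * A ^ m / qPochFin Q Q m| =
        Q ^ (m.choose 2) * A ^ m / qPochFin Q Q m := by
      intro m
      rw [abs_div, abs_mul, abs_mul, abs_pow, abs_neg, abs_one, one_pow, one_mul,
        abs_of_pos (pow_pos hQ0 _), abs_of_pos (pow_pos hA0 _), abs_of_pos (hpQpos m)]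
    have hhs : Summable h := by
      apply Summable.of_abs
      apply Summable.of_nonneg_of_le (fun m => abs_nonneg _) _
        ((summable_qs_neg hQ0 hQ1 A).mul_right (qs Q (-|z|)))
      intro m
      simp only [hhdef]
      rw [abs_mul, hcabs m]
      apply mul_le_mul_of_nonneg_left _
        (div_nonneg (mul_nonneg (pow_nonneg hQ0.le _) (pow_nonneg hA0.le _)) (hpQpos m).le)
      calc |qs Q (z * Q ^ m)| ≤ qs Q (-|z * Q ^ m|) := abs_qs_le hQ0 hQ1 _
        _ ≤ qs Q (-|z|) := by
            apply qs_neg_mono hQ0 hQ1 (abs_nonneg _)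
            rw [abs_mul, abs_pow, abs_of_pos hQ0]
            calc |z| * Q ^ m ≤ |z| * 1 :=
                mul_le_mul_of_nonneg_left (pow_le_one₀ hQ0.le hQ1.le) (abs_nonneg z)
              _ = |z| := mul_one _
    have hsplit0 : (∑' m : ℕ, h m) = ∑' i : ℕ, h (i + p) := by
      rw [← hhs.sum_add_tsum_nat_add p]
      have : (∑ m ∈ Finset.range p, h m) = 0 := by
        apply Finset.sum_eq_zero
        intro m hm
        simp only [hhdef]
        rw [hvanish m (Finset.mem_range.mp hm), mul_zero]
      rw [this, zero_add]
    -- termwise bound for the shifted sum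
    have hsQ1 : ∀ i : ℕ, qs Q (Q ^ (i+1)) = qs Q Q / qPochFin Q Q i := by
      intro i
      have hit := qs_iterate hQ0 hQ1 Q i
      rw [show Q * Q ^ i = Q ^ (i+1) from (pow_succ' Q i).symm] at hit
      rw [hit, mul_comm, mul_div_assoc, div_self (hpQpos i).ne', mul_one]
    have hQi1pos : ∀ i : ℕ, 0 ≤ qs Q (Q ^ (i+1)) := by
      intro i
      apply (qs_pos hQ0 hQ1 (pow_pos hQ0 _).le _).le
      exact pow_lt_one₀ hQ0.le hQ1 (Nat.succ_ne_zero i)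
    have hhb : ∀ i : ℕ, |h (i + p)| ≤
        (Q ^ (p.choose 2) * A ^ p) * (Q ^ (i.choose 2) * (A * Q) ^ i / qPochFin Q Q i) := by
      intro i
      simp only [hhdef]
      rw [hshift i, abs_mul, hcabs (i + p), abs_of_nonneg (hQi1pos i)]
      have hfrac : qs Q (Q ^ (i+1)) / qPochFin Q Q (i + p) ≤ 1 / qPochFin Q Q i := by
        rw [hsQ1 i, div_div, div_le_div_iff₀ (mul_pos (hpQpos i) (hpQpos (i + p))) (hpQpos i)]
        nlinarith [qs_le_pochFin hQ0 hQ1 hQ0.le hQ1 (i + p), hpQpos i, hpQpos (i + p)]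
      have hexp : Q ^ ((i + p).choose 2) ≤ Q ^ (i.choose 2 + p.choose 2 + i) := by
        apply pow_le_pow_of_le_one hQ0.le hQ1.le
        rw [c2add]
        have : i ≤ i * p := Nat.le_mul_of_pos_right i (by omega)
        omega
      have hfirst : Q ^ ((i + p).choose 2) * A ^ (i + p) ≤
          Q ^ (i.choose 2 + p.choose 2 + i) * A ^ (i + p) :=
        mul_le_mul_of_nonneg_right hexp (pow_nonneg hA0.le _)
      calc Q ^ ((i + p).choose 2) * A ^ (i + p) / qPochFin Q Q (i + p) * qs Q (Q ^ (i + 1))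
          = (Q ^ ((i + p).choose 2) * A ^ (i + p)) *
              (qs Q (Q ^ (i + 1)) / qPochFin Q Q (i + p)) := by ring
        _ ≤ (Q ^ (i.choose 2 + p.choose 2 + i) * A ^ (i + p)) * (1 / qPochFin Q Q i) := by
            apply mul_le_mul hfirst hfrac
              (div_nonneg (hQi1pos i) (hpQpos (i + p)).le)
              (mul_nonneg (pow_nonneg hQ0.le _) (pow_nonneg hA0.le _))
        _ = (Q ^ (p.choose 2) * A ^ p) *
              (Q ^ (i.choose 2) * (A * Q) ^ i / qPochFin Q Q i) := by
            rw [pow_add Q, pow_add Q, pow_add A, mul_pow]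
            ring
    -- sum the bound
    have hsum2 : Summable fun i : ℕ => h (i + p) := (summable_nat_add_iff p).mpr hhs
    have hrhs : Summable fun i : ℕ => (Q ^ (p.choose 2) * A ^ p) *
        (Q ^ (i.choose 2) * (A * Q) ^ i / qPochFin Q Q i) :=
      (summable_qs_neg hQ0 hQ1 (A * Q)).mul_left _
    have hb2 : |qs Q A * jnu q ν x| ≤ (Q ^ (p.choose 2) * A ^ p) * qs Q (-(A * Q)) := by
      rw [hkey, hsplit0]
      calc |∑' i : ℕ, h (i + p)| ≤ ∑' i : ℕ, |h (i + p)| := abs_tsum_le hsum2.abs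
        _ ≤ ∑' i : ℕ, (Q ^ (p.choose 2) * A ^ p) *
              (Q ^ (i.choose 2) * (A * Q) ^ i / qPochFin Q Q i) :=
            Summable.tsum_le_tsum hhb hsum2.abs hrhs
        _ = (Q ^ (p.choose 2) * A ^ p) * qs Q (-(A * Q)) := by
            rw [tsum_mul_left, qs_neg_eq]
    have hAQA : qs Q (-(A * Q)) ≤ qs Q (-Q) * qs Q (-A) := by
      have h1 : qs Q (-(A * Q)) ≤ qs Q (-A) := by
        apply qs_neg_mono hQ0 hQ1 (mul_nonneg hA0.le hQ0.le)
        nlinarith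
      have h2 : 0 ≤ qs Q (-A) := by linarith
      nlinarith
    have hjle : |jnu q ν x| ≤ qs Q (-Q) * qs Q (-A) / qs Q A * (Q ^ (p.choose 2) * A ^ p) := by
      rw [div_mul_eq_mul_div, le_div_iff₀ hqsA]
      have habsmul : |qs Q A * jnu q ν x| = qs Q A * |jnu q ν x| := by
        rw [abs_mul, abs_of_pos hqsA]
      have hQpApos : 0 ≤ Q ^ (p.choose 2) * A ^ p :=
        mul_nonneg (pow_nonneg hQ0.le _) (pow_nonneg hA0.le _)
      calc |jnu q ν x| * qs Q A = qs Q A * |jnu q ν x| := mul_comm _ _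
        _ ≤ (Q ^ (p.choose 2) * A ^ p) * qs Q (-(A * Q)) := by rw [← habsmul]; exact hb2
        _ ≤ (Q ^ (p.choose 2) * A ^ p) * (qs Q (-Q) * qs Q (-A)) :=
            mul_le_mul_of_nonneg_left hAQA hQpApos
        _ = qs Q (-Q) * qs Q (-A) * (Q ^ (p.choose 2) * A ^ p) := by ring
    -- exponent conversion
    have hpow : Q ^ (p.choose 2) * A ^ p = q ^ ((n:ℝ) ^ 2 - (2 * ν + 1) * (n:ℝ)) := by
      have hc2 : 2 * (p.choose 2) = (p - 1) * p := by
        have h := two_mul_c2 (p - 1)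
        rwa [Nat.sub_add_cancel hp1] at h
      have e1 : Q ^ (p.choose 2) = q ^ (((2 * p.choose 2 : ℕ) : ℝ)) := by
        rw [hQdef, ← pow_mul, Real.rpow_natCast]
      have e2 : A ^ p = q ^ ((2 * ν + 2) * (p:ℝ)) := by
        rw [hAdef, ← Real.rpow_natCast (q ^ (2 * ν + 2)) p, ← Real.rpow_mul hq.le]
      rw [e1, e2, ← Real.rpow_add hq]
      congr 1
      have hcast : ((2 * p.choose 2 : ℕ) : ℝ) = ((p:ℝ) - 1) * (p:ℝ) := by
        rw [hc2]
        push_cast [Nat.cast_sub hp1]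
        ring
      have hn' : (n:ℝ) = -(p:ℝ) := by
        rw [hnp]
        push_cast
        ring
      rw [hcast, hn']
      ring
    rw [hC1, hC2, hC3, ← hpow]
    exact hjle
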